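/- Let f : ℝⁿ → ℝ be differentiable with L-Lipschitz gradient (L > 0), bounded below by f* ∈ ℝ, and let (wₜ) be the gradient descent sequence w_{t+1} = wₜ - η∇f(wₜ) with 0 < η ≤ 1/L. Then for every T ≥ 1, min_{0 ≤ t < T} ‖∇f(wₜ)‖² ≤ 2(f(w₀) - f*)/(η·T). -/

import Mathlib

set_option maxHeartbeats 1000000

open intervalIntegral in
lemma quad_upper_bound {n : ℕ} (f : EuclideanSpace ℝ (Fin n) → ℝ)
    (hf : Differentiable ℝ f) (L : ℝ) (hL : 0 ≤ L)
    (hlip : LipschitzWith (Real.toNNReal L) (gradient f))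
    (x v : EuclideanSpace ℝ (Fin n)) :
    f (x + v) ≤ f x + inner ℝ (gradient f x) v + L / 2 * ‖v‖ ^ 2 := by
  have hgrad : ∀ y, HasFDerivAt f ((InnerProductSpace.toDual ℝ _) (gradient f y)) y := by
    intro y
    exact hasGradientAt_iff_hasFDerivAt.mp (hf y).hasGradientAt
  have hline : ∀ t : ℝ, HasDerivAt (fun t : ℝ => x + t • v) v t := by
    intro t
    simpa using ((hasDerivAt_id t).smul_const v).const_add x
  have hφ : ∀ t : ℝ, HasDerivAt (fun t : ℝ => f (x + t • v))
      (inner ℝ (gradient f (x + t • v)) v) t := by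
    intro t
    exact (hgrad (x + t • v)).comp_hasDerivAt t (hline t)
  have hcont : Continuous (fun t : ℝ => (inner ℝ (gradient f (x + t • v)) v : ℝ)) := by
    apply Continuous.inner
    · exact hlip.continuous.comp (continuous_const.add (continuous_id.smul continuous_const))
    · exact continuous_const
  have hFTC : f (x + v) - f x = ∫ t in (0:ℝ)..1, inner ℝ (gradient f (x + t • v)) v := by
    have h := intervalIntegral.integral_eq_sub_of_hasDerivAt (a := 0) (b := 1)
      (fun t _ => hφ t) (hcont.intervalIntegrable 0 1)
    rw [one_smul, zero_smul, add_zero] at h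
    exact h.symm
  have hbound : ∀ t ∈ Set.Icc (0:ℝ) 1,
      (inner ℝ (gradient f (x + t • v)) v : ℝ) ≤ inner ℝ (gradient f x) v + L * t * ‖v‖ ^ 2 := by
    intro t ht
    have h1 : (inner ℝ (gradient f (x + t • v)) v : ℝ) - inner ℝ (gradient f x) v
        = inner ℝ (gradient f (x + t • v) - gradient f x) v := by
      rw [inner_sub_left]
    have h2 : ‖gradient f (x + t • v) - gradient f x‖ ≤ L * t * ‖v‖ := by
      have := hlip.dist_le_mul (x + t • v) x
      rw [dist_eq_norm] at this
      simp only [dist_eq_norm, add_sub_cancel_left] at this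
      calc ‖gradient f (x + t • v) - gradient f x‖ ≤ L.toNNReal * ‖t • v‖ := by
            simpa [dist_eq_norm] using this
        _ = L * (t * ‖v‖) := by
            rw [norm_smul, Real.coe_toNNReal L hL, Real.norm_eq_abs, abs_of_nonneg ht.1]
        _ = L * t * ‖v‖ := by ring
    have h3 : (inner ℝ (gradient f (x + t • v) - gradient f x) v : ℝ) ≤ L * t * ‖v‖ * ‖v‖ :=
      le_trans (real_inner_le_norm _ _) (by
        apply mul_le_mul_of_nonneg_right h2 (norm_nonneg v))
    nlinarith [h1, h3]
  have hint : (∫ t in (0:ℝ)..1, inner ℝ (gradient f (x + t • v)) v : ℝ)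
      ≤ ∫ t in (0:ℝ)..1, (inner ℝ (gradient f x) v + L * t * ‖v‖ ^ 2 : ℝ) := by
    apply intervalIntegral.integral_mono_on (by norm_num)
      (hcont.intervalIntegrable 0 1)
      ((continuous_const.add ((continuous_const.mul continuous_id).mul continuous_const)).intervalIntegrable 0 1)
    exact hbound
  have hrhs : (∫ t in (0:ℝ)..1, (inner ℝ (gradient f x) v + L * t * ‖v‖ ^ 2 : ℝ))
      = inner ℝ (gradient f x) v + L / 2 * ‖v‖ ^ 2 := by
    have h1 : (fun t : ℝ => (inner ℝ (gradient f x) v + L * t * ‖v‖ ^ 2 : ℝ))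
        = fun t : ℝ => inner ℝ (gradient f x) v + (L * ‖v‖ ^ 2) * t := by
      funext t; ring
    rw [h1, intervalIntegral.integral_add (g := fun t : ℝ => L * ‖v‖ ^ 2 * t) intervalIntegrable_const
      ((continuous_const.mul continuous_id').intervalIntegrable 0 1),
      intervalIntegral.integral_const_mul, integral_id]
    simp
    ring
  rw [hrhs] at hint
  linarith [hFTC, hint]

theorem min_grad_norm_bound {n : ℕ} (f : EuclideanSpace ℝ (Fin n) → ℝ)
    (hf : Differentiable ℝ f) (L : ℝ) (hL : 0 < L)
    (hlip : LipschitzWith (Real.toNNReal L) (gradient f))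
    (fstar : ℝ) (hbound : ∀ x, f x ≥ fstar)
    (η : ℝ) (hη : 0 < η) (hηL : η ≤ 1 / L)
    (w : ℕ → EuclideanSpace ℝ (Fin n))
    (hrec : ∀ t, w (t + 1) = w t - η • gradient f (w t))
    (T : ℕ) (hT : 1 ≤ T) :
    (Finset.range T).inf' (Finset.nonempty_range_iff.mpr (by omega))
        (fun t => ‖gradient f (w t)‖ ^ 2)
      ≤ 2 * (f (w 0) - fstar) / (η * T) := by
  have hηL' : η * L ≤ 1 := by
    rw [le_div_iff₀ hL] at hηL; linarith
  have hstep : ∀ t, f (w (t + 1)) ≤ f (w t) - η / 2 * ‖gradient f (w t)‖ ^ 2 := by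
    intro t
    have h := quad_upper_bound f hf L hL.le hlip (w t) (-(η • gradient f (w t)))
    have e1 : w t + -(η • gradient f (w t)) = w t - η • gradient f (w t) := by
      rw [sub_eq_add_neg]
    rw [e1, ← hrec t] at h
    have e2 : (inner ℝ (gradient f (w t)) (-(η • gradient f (w t))) : ℝ)
        = -(η * ‖gradient f (w t)‖ ^ 2) := by
      rw [inner_neg_right, real_inner_smul_right, real_inner_self_eq_norm_sq]
    have e3 : ‖-(η • gradient f (w t))‖ = η * ‖gradient f (w t)‖ := by
      rw [norm_neg, norm_smul, Real.norm_eq_abs, abs_of_pos hη]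
    rw [e2, e3] at h
    nlinarith [sq_nonneg (‖gradient f (w t)‖), mul_nonneg (mul_nonneg hη.le hη.le)
      (mul_nonneg hL.le (sq_nonneg ‖gradient f (w t)‖))]
  have hsum : ∀ S : ℕ, η / 2 * ∑ t ∈ Finset.range S, ‖gradient f (w t)‖ ^ 2
      ≤ f (w 0) - f (w S) := by
    intro S
    induction S with
    | zero => simp
    | succ S ih =>
      rw [Finset.sum_range_succ]
      have := hstep S
      linarith
  set m := (Finset.range T).inf' (Finset.nonempty_range_iff.mpr (by omega))
      (fun t => ‖gradient f (w t)‖ ^ 2) with hm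
  have hmin : (T : ℝ) * m ≤ ∑ t ∈ Finset.range T, ‖gradient f (w t)‖ ^ 2 := by
    calc (T : ℝ) * m = ∑ _t ∈ Finset.range T, m := by
          rw [Finset.sum_const, Finset.card_range, nsmul_eq_mul]
      _ ≤ _ := Finset.sum_le_sum fun t ht => Finset.inf'_le _ ht
  have hTpos : (0 : ℝ) < T := by exact_mod_cast hT
  rw [le_div_iff₀ (by positivity)]
  have h1 := hsum T
  have h2 := hbound (w T)
  nlinarith [mul_le_mul_of_nonneg_left hmin hη.le]
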